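/- K-Knuth equivalent words have equal longest strictly increasing subsequence lengths and equal longest strictly decreasing subsequence lengths: if w1 ≡ w2 under K-Knuth equivalence then lis(w1)=lis(w2) and lds(w1)=lds(w2). -/

import Mathlib

/-- One application, inside an arbitrary context, of a K-Knuth generating relation:
`xzy ≡ zxy` and `yxz ≡ yzx` for `x < y < z`, `x ≡ xx`, and `xyx ≡ yxy`. -/
inductive KKnuthRel : List ℕ+ → List ℕ+ → Prop
  | rel1 (u v : List ℕ+) (x y z : ℕ+) (h1 : x < y) (h2 : y < z) :
      KKnuthRel (u ++ [x, z, y] ++ v) (u ++ [z, x, y] ++ v)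
  | rel2 (u v : List ℕ+) (x y z : ℕ+) (h1 : x < y) (h2 : y < z) :
      KKnuthRel (u ++ [y, x, z] ++ v) (u ++ [y, z, x] ++ v)
  | rel3 (u v : List ℕ+) (x : ℕ+) :
      KKnuthRel (u ++ [x] ++ v) (u ++ [x, x] ++ v)
  | rel4 (u v : List ℕ+) (x y : ℕ+) :
      KKnuthRel (u ++ [x, y, x] ++ v) (u ++ [y, x, y] ++ v)

/-- K-Knuth equivalence of words: the equivalence closure of the generating moves. -/
def KKnuth : List ℕ+ → List ℕ+ → Prop := Relation.EqvGen KKnuthRel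

/-- Length of the longest strictly increasing subsequence of a word. -/
def lis (w : List ℕ+) : ℕ :=
  ((w.sublists.filter fun s => decide (List.IsChain (· < ·) s)).map List.length).foldr max 0

/-- Length of the longest strictly decreasing subsequence of a word. -/
def lds (w : List ℕ+) : ℕ :=
  ((w.sublists.filter fun s => decide (List.IsChain (· > ·) s)).map List.length).foldr max 0

namespace KKaux

lemma le_foldr_max {L : List ℕ} {a : ℕ} (h : a ∈ L) : a ≤ L.foldr max 0 := by
  induction L with
  | nil => simp at h
  | cons b t ih =>
    rcases List.mem_cons.1 h with rfl | h
    · exact le_max_left _ _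
    · exact le_trans (ih h) (le_max_right _ _)

lemma foldr_max_le {L : List ℕ} {n : ℕ} (h : ∀ a ∈ L, a ≤ n) : L.foldr max 0 ≤ n := by
  induction L with
  | nil => simp
  | cons b t ih =>
    simp only [List.foldr_cons, max_le_iff]
    exact ⟨h b (.head _), ih fun a ha => h a (.tail _ ha)⟩

lemma le_lis {w s : List ℕ+} (hs : s.Sublist w) (hc : s.Pairwise (· < ·)) :
    s.length ≤ lis w := by
  apply le_foldr_max
  apply List.mem_map_of_mem
  rw [List.mem_filter]
  exact ⟨List.mem_sublists.2 hs, decide_eq_true (List.isChain_iff_pairwise.2 hc)⟩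

lemma lis_le {w : List ℕ+} {n : ℕ}
    (h : ∀ s : List ℕ+, s.Sublist w → s.Pairwise (· < ·) → s.length ≤ n) : lis w ≤ n := by
  apply foldr_max_le
  intro a ha
  rcases List.mem_map.1 ha with ⟨s, hs, rfl⟩
  rw [List.mem_filter] at hs
  exact h s (List.mem_sublists.1 hs.1) (List.isChain_iff_pairwise.1 (of_decide_eq_true hs.2))

lemma le_lds {w s : List ℕ+} (hs : s.Sublist w) (hc : s.Pairwise (· > ·)) :
    s.length ≤ lds w := by
  apply le_foldr_max
  apply List.mem_map_of_mem
  rw [List.mem_filter]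
  exact ⟨List.mem_sublists.2 hs, decide_eq_true (List.isChain_iff_pairwise.2 hc)⟩

lemma lds_le {w : List ℕ+} {n : ℕ}
    (h : ∀ s : List ℕ+, s.Sublist w → s.Pairwise (· > ·) → s.length ≤ n) : lds w ≤ n := by
  apply foldr_max_le
  intro a ha
  rcases List.mem_map.1 ha with ⟨s, hs, rfl⟩
  rw [List.mem_filter] at hs
  exact h s (List.mem_sublists.1 hs.1) (List.isChain_iff_pairwise.1 (of_decide_eq_true hs.2))

/-- The data needed to replace a middle sublist `b` by `b'`. -/
def Repl (r : ℕ+ → ℕ+ → Prop) (m2 b : List ℕ+) : Prop :=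
  ∃ b' : List ℕ+, b'.Sublist m2 ∧ b'.length = b.length ∧ b'.Pairwise r ∧
    (∀ e ∈ b', ∀ p, (∀ q ∈ b, r p q) → r p e) ∧
    (∀ e ∈ b', ∀ p, (∀ q ∈ b, r q p) → r e p)

lemma Repl.same {r : ℕ+ → ℕ+ → Prop} {m2 b : List ℕ+} (hb : b.Sublist m2)
    (hp : b.Pairwise r) : Repl r m2 b :=
  ⟨b, hb, rfl, hp, fun e he p hp' => hp' e he, fun e he p hp' => hp' e he⟩

lemma pmr {r : ℕ+ → ℕ+ → Prop} {a b b' c : List ℕ+}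
    (h : (a ++ (b ++ c)).Pairwise r) (hb' : b'.Pairwise r)
    (L : ∀ e ∈ b', ∀ p, (∀ q ∈ b, r p q) → r p e)
    (R : ∀ e ∈ b', ∀ p, (∀ q ∈ b, r q p) → r e p) :
    (a ++ (b' ++ c)).Pairwise r := by
  rw [List.pairwise_append, List.pairwise_append] at h ⊢
  obtain ⟨ha, ⟨hb, hc, hbc⟩, hac⟩ := h
  refine ⟨ha, ⟨hb', hc, ?_⟩, ?_⟩
  · intro p hp q hq
    exact R p hp q fun q' hq' => hbc q' hq' q hq
  · intro p hp q hq
    rcases List.mem_append.1 hq with hq | hq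
    · exact L q hq p fun q' hq' => hac p hp q' (List.mem_append.2 (.inl hq'))
    · exact hac p hp q (List.mem_append.2 (.inr hq))

lemma transfer {r : ℕ+ → ℕ+ → Prop} {m1 m2 : List ℕ+} (u v : List ℕ+)
    (H : ∀ b, b.Sublist m1 → b.Pairwise r → Repl r m2 b)
    (s : List ℕ+) (hs : s.Sublist (u ++ m1 ++ v)) (hp : s.Pairwise r) :
    ∃ t : List ℕ+, t.Sublist (u ++ m2 ++ v) ∧ t.Pairwise r ∧ t.length = s.length := by
  rw [List.append_assoc] at hs
  obtain ⟨a, s', rfl, ha, hs'⟩ := List.sublist_append_iff.1 hs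
  obtain ⟨b, c, rfl, hb, hc⟩ := List.sublist_append_iff.1 hs'
  have hpb : b.Pairwise r :=
    ((List.sublist_append_left b c).trans (List.sublist_append_right a _)) |> hp.sublist
  obtain ⟨b', hb', hlen, hpb', hL, hR⟩ := H b hb hpb
  refine ⟨a ++ (b' ++ c), ?_, pmr hp hpb' hL hR, by simp [hlen]⟩
  rw [List.append_assoc]
  exact ha.append (hb'.append hc)

lemma lis_eq {m1 m2 : List ℕ+} (u v : List ℕ+)
    (H12 : ∀ b, b.Sublist m1 → b.Pairwise (· < ·) → Repl (· < ·) m2 b)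
    (H21 : ∀ b, b.Sublist m2 → b.Pairwise (· < ·) → Repl (· < ·) m1 b) :
    lis (u ++ m1 ++ v) = lis (u ++ m2 ++ v) := by
  apply le_antisymm
  · apply lis_le
    intro s hs hp
    obtain ⟨t, ht, htp, hl⟩ := transfer u v H12 s hs hp
    exact hl ▸ le_lis ht htp
  · apply lis_le
    intro s hs hp
    obtain ⟨t, ht, htp, hl⟩ := transfer u v H21 s hs hp
    exact hl ▸ le_lis ht htp

lemma lds_eq {m1 m2 : List ℕ+} (u v : List ℕ+)
    (H12 : ∀ b, b.Sublist m1 → b.Pairwise (· > ·) → Repl (· > ·) m2 b)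
    (H21 : ∀ b, b.Sublist m2 → b.Pairwise (· > ·) → Repl (· > ·) m1 b) :
    lds (u ++ m1 ++ v) = lds (u ++ m2 ++ v) := by
  apply le_antisymm
  · apply lds_le
    intro s hs hp
    obtain ⟨t, ht, htp, hl⟩ := transfer u v H12 s hs hp
    exact hl ▸ le_lds ht htp
  · apply lds_le
    intro s hs hp
    obtain ⟨t, ht, htp, hl⟩ := transfer u v H21 s hs hp
    exact hl ▸ le_lds ht htp

lemma sublist_triple {l : List ℕ+} {a b c : ℕ+} (h : l.Sublist [a,b,c]) :
    l = [] ∨ l=[a] ∨ l=[b] ∨ l=[c] ∨ l=[a,b] ∨ l=[a,c] ∨ l=[b,c] ∨ l=[a,b,c] := by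
  have h2 := List.mem_sublists.2 h
  simp [List.sublists] at h2
  tauto

lemma sublist_single {l : List ℕ+} {a : ℕ+} (h : l.Sublist [a]) :
    l = [] ∨ l = [a] := by
  have h2 := List.mem_sublists.2 h
  simp [List.sublists] at h2
  tauto

section
variable {r : ℕ+ → ℕ+ → Prop}
variable {x y z : ℕ+}

lemma H1lt12 (h1 : x < y) (h2 : y < z) :
    ∀ b : List ℕ+, b.Sublist [x,z,y] → b.Pairwise (· < ·) → Repl (· < ·) [z,x,y] b := by
  intro b hb hpb
  rcases sublist_triple hb with rfl|rfl|rfl|rfl|rfl|rfl|rfl|rfl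
  · exact .same (List.nil_sublist _) hpb
  · exact .same (.cons _ (.cons₂ _ (.cons _ .slnil))) hpb
  · exact .same (.cons₂ _ (.cons _ (.cons _ .slnil))) hpb
  · exact .same (.cons _ (.cons _ (.cons₂ _ .slnil))) hpb
  · -- b = [x,z] → b' = [x,y]
    refine ⟨[x,y], .cons _ (.cons₂ _ (.cons₂ _ .slnil)), rfl, by simp [h1], ?_, ?_⟩
    · intro e he p hp; simp at he hp
      rcases he with rfl|rfl
      · exact hp.1
      · exact hp.1.trans h1
    · intro e he p hp; simp at he hp
      rcases he with rfl|rfl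
      · exact hp.1
      · exact h2.trans hp.2
  · exact .same (.cons _ (.cons₂ _ (.cons₂ _ .slnil))) hpb
  · exfalso; simp at hpb; exact lt_asymm h2 hpb
  · exfalso
    have := hpb.sublist (List.Sublist.cons _ (.cons₂ _ (.cons₂ _ .slnil)))
    simp at this; exact lt_asymm h2 this

lemma H1lt21 (h1 : x < y) (h2 : y < z) :
    ∀ b : List ℕ+, b.Sublist [z,x,y] → b.Pairwise (· < ·) → Repl (· < ·) [x,z,y] b := by
  intro b hb hpb
  rcases sublist_triple hb with rfl|rfl|rfl|rfl|rfl|rfl|rfl|rfl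
  · exact .same (List.nil_sublist _) hpb
  · exact .same (.cons _ (.cons₂ _ (.cons _ .slnil))) hpb
  · exact .same (.cons₂ _ (.cons _ (.cons _ .slnil))) hpb
  · exact .same (.cons _ (.cons _ (.cons₂ _ .slnil))) hpb
  · exfalso; simp at hpb; exact lt_asymm (h1.trans h2) hpb
  · exfalso; simp at hpb; exact lt_asymm h2 hpb
  · exact .same (.cons₂ _ (.cons _ (.cons₂ _ .slnil))) hpb
  · exfalso
    have := hpb.sublist (List.Sublist.cons₂ _ (.cons₂ _ (.cons _ .slnil)))
    simp at this; exact lt_asymm (h1.trans h2) this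

lemma H1gt12 (h1 : x < y) (h2 : y < z) :
    ∀ b : List ℕ+, b.Sublist [x,z,y] → b.Pairwise (· > ·) → Repl (· > ·) [z,x,y] b := by
  intro b hb hpb
  rcases sublist_triple hb with rfl|rfl|rfl|rfl|rfl|rfl|rfl|rfl
  · exact .same (List.nil_sublist _) hpb
  · exact .same (.cons _ (.cons₂ _ (.cons _ .slnil))) hpb
  · exact .same (.cons₂ _ (.cons _ (.cons _ .slnil))) hpb
  · exact .same (.cons _ (.cons _ (.cons₂ _ .slnil))) hpb
  · exfalso; simp at hpb; exact lt_asymm (h1.trans h2) hpb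
  · exfalso; simp at hpb; exact lt_asymm h1 hpb
  · exact .same (.cons₂ _ (.cons _ (.cons₂ _ .slnil))) hpb
  · exfalso
    have := hpb.sublist (List.Sublist.cons₂ _ (.cons₂ _ (.cons _ .slnil)))
    simp at this; exact lt_asymm (h1.trans h2) this

lemma H1gt21 (h1 : x < y) (h2 : y < z) :
    ∀ b : List ℕ+, b.Sublist [z,x,y] → b.Pairwise (· > ·) → Repl (· > ·) [x,z,y] b := by
  intro b hb hpb
  rcases sublist_triple hb with rfl|rfl|rfl|rfl|rfl|rfl|rfl|rfl
  · exact .same (List.nil_sublist _) hpb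
  · exact .same (.cons _ (.cons₂ _ (.cons _ .slnil))) hpb
  · exact .same (.cons₂ _ (.cons _ (.cons _ .slnil))) hpb
  · exact .same (.cons _ (.cons _ (.cons₂ _ .slnil))) hpb
  · -- b = [z,x] → b' = [z,y]
    refine ⟨[z,y], .cons _ (.cons₂ _ (.cons₂ _ .slnil)), rfl, by simp [h2], ?_, ?_⟩
    · intro e he p hp; simp at he hp
      rcases he with rfl|rfl
      · exact hp.1
      · exact h2.trans hp.1
    · intro e he p hp; simp at he hp
      rcases he with rfl|rfl
      · exact hp.1
      · exact hp.2.trans h1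
  · exact .same (.cons _ (.cons₂ _ (.cons₂ _ .slnil))) hpb
  · exfalso; simp at hpb; exact lt_asymm h1 hpb
  · exfalso
    have := hpb.sublist (List.Sublist.cons _ (.cons₂ _ (.cons₂ _ .slnil)))
    simp at this; exact lt_asymm h1 this

lemma H2lt12 (h1 : x < y) (h2 : y < z) :
    ∀ b : List ℕ+, b.Sublist [y,x,z] → b.Pairwise (· < ·) → Repl (· < ·) [y,z,x] b := by
  intro b hb hpb
  rcases sublist_triple hb with rfl|rfl|rfl|rfl|rfl|rfl|rfl|rfl
  · exact .same (List.nil_sublist _) hpb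
  · exact .same (.cons₂ _ (.cons _ (.cons _ .slnil))) hpb
  · exact .same (.cons _ (.cons _ (.cons₂ _ .slnil))) hpb
  · exact .same (.cons _ (.cons₂ _ (.cons _ .slnil))) hpb
  · exfalso; simp at hpb; exact lt_asymm h1 hpb
  · exact .same (.cons₂ _ (.cons₂ _ (.cons _ .slnil))) hpb
  · -- b = [x,z] → b' = [y,z]
    refine ⟨[y,z], .cons₂ _ (.cons₂ _ (.cons _ .slnil)), rfl, by simp [h2], ?_, ?_⟩
    · intro e he p hp; simp at he hp
      rcases he with rfl|rfl
      · exact hp.1.trans h1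
      · exact hp.2
    · intro e he p hp; simp at he hp
      rcases he with rfl|rfl
      · exact h2.trans hp.2
      · exact hp.2
  · exfalso
    have := hpb.sublist (List.Sublist.cons₂ _ (.cons₂ _ (.cons _ .slnil)))
    simp at this; exact lt_asymm h1 this

lemma H2lt21 (h1 : x < y) (h2 : y < z) :
    ∀ b : List ℕ+, b.Sublist [y,z,x] → b.Pairwise (· < ·) → Repl (· < ·) [y,x,z] b := by
  intro b hb hpb
  rcases sublist_triple hb with rfl|rfl|rfl|rfl|rfl|rfl|rfl|rfl
  · exact .same (List.nil_sublist _) hpb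
  · exact .same (.cons₂ _ (.cons _ (.cons _ .slnil))) hpb
  · exact .same (.cons _ (.cons _ (.cons₂ _ .slnil))) hpb
  · exact .same (.cons _ (.cons₂ _ (.cons _ .slnil))) hpb
  · exact .same (.cons₂ _ (.cons _ (.cons₂ _ .slnil))) hpb
  · exfalso; simp at hpb; exact lt_asymm h1 hpb
  · exfalso; simp at hpb; exact lt_asymm (h1.trans h2) hpb
  · exfalso
    have := hpb.sublist (List.Sublist.cons _ (.cons₂ _ (.cons₂ _ .slnil)))
    simp at this; exact lt_asymm (h1.trans h2) this

lemma H2gt12 (h1 : x < y) (h2 : y < z) :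
    ∀ b : List ℕ+, b.Sublist [y,x,z] → b.Pairwise (· > ·) → Repl (· > ·) [y,z,x] b := by
  intro b hb hpb
  rcases sublist_triple hb with rfl|rfl|rfl|rfl|rfl|rfl|rfl|rfl
  · exact .same (List.nil_sublist _) hpb
  · exact .same (.cons₂ _ (.cons _ (.cons _ .slnil))) hpb
  · exact .same (.cons _ (.cons _ (.cons₂ _ .slnil))) hpb
  · exact .same (.cons _ (.cons₂ _ (.cons _ .slnil))) hpb
  · exact .same (.cons₂ _ (.cons _ (.cons₂ _ .slnil))) hpb
  · exfalso; simp at hpb; exact lt_asymm h2 hpb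
  · exfalso; simp at hpb; exact lt_asymm (h1.trans h2) hpb
  · exfalso
    have := hpb.sublist (List.Sublist.cons₂ _ (.cons _ (.cons₂ _ .slnil)))
    simp at this; exact lt_asymm h2 this

lemma H2gt21 (h1 : x < y) (h2 : y < z) :
    ∀ b : List ℕ+, b.Sublist [y,z,x] → b.Pairwise (· > ·) → Repl (· > ·) [y,x,z] b := by
  intro b hb hpb
  rcases sublist_triple hb with rfl|rfl|rfl|rfl|rfl|rfl|rfl|rfl
  · exact .same (List.nil_sublist _) hpb
  · exact .same (.cons₂ _ (.cons _ (.cons _ .slnil))) hpb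
  · exact .same (.cons _ (.cons _ (.cons₂ _ .slnil))) hpb
  · exact .same (.cons _ (.cons₂ _ (.cons _ .slnil))) hpb
  · exfalso; simp at hpb; exact lt_asymm h2 hpb
  · exact .same (.cons₂ _ (.cons₂ _ (.cons _ .slnil))) hpb
  · -- b = [z,x] → b' = [y,x]
    refine ⟨[y,x], .cons₂ _ (.cons₂ _ (.cons _ .slnil)), rfl, by simp [h1], ?_, ?_⟩
    · intro e he p hp; simp at he hp
      rcases he with rfl|rfl
      · exact h2.trans hp.1
      · exact hp.2
    · intro e he p hp; simp at he hp
      rcases he with rfl|rfl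
      · exact hp.2.trans h1
      · exact hp.2
  · exfalso
    have := hpb.sublist (List.Sublist.cons₂ _ (.cons₂ _ (.cons _ .slnil)))
    simp at this; exact lt_asymm h2 this

lemma H3a [IsIrrefl ℕ+ r] :
    ∀ b : List ℕ+, b.Sublist [x] → b.Pairwise r → Repl r [x,x] b := by
  intro b hb hpb
  rcases sublist_single hb with rfl|rfl
  · exact .same (List.nil_sublist _) hpb
  · exact .same (.cons₂ _ (.cons _ .slnil)) hpb

lemma sublist_pair {l : List ℕ+} {a b : ℕ+} (h : l.Sublist [a,b]) :
    l = [] ∨ l = [a] ∨ l = [b] ∨ l = [a,b] := by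
  have h2 := List.mem_sublists.2 h
  simp [List.sublists] at h2
  tauto

lemma H3b [IsIrrefl ℕ+ r] :
    ∀ b : List ℕ+, b.Sublist [x,x] → b.Pairwise r → Repl r [x] b := by
  intro b hb hpb
  rcases sublist_pair hb with rfl|rfl|rfl|rfl
  · exact .same (List.nil_sublist _) hpb
  · exact .same (.cons₂ _ .slnil) hpb
  · exact .same (.cons₂ _ .slnil) hpb
  · exfalso
    have := hpb.sublist (List.Sublist.cons₂ (l₁ := [x]) _ (.cons₂ _ .slnil))
    simp [List.pairwise_cons] at this
    exact irrefl x (by tauto)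

lemma H4 [IsIrrefl ℕ+ r] :
    ∀ b : List ℕ+, b.Sublist [x,y,x] → b.Pairwise r → Repl r [y,x,y] b := by
  intro b hb hpb
  rcases sublist_triple hb with rfl|rfl|rfl|rfl|rfl|rfl|rfl|rfl
  · exact .same (List.nil_sublist _) hpb
  · exact .same (.cons _ (.cons₂ _ (.cons _ .slnil))) hpb
  · exact .same (.cons₂ _ (.cons _ (.cons _ .slnil))) hpb
  · exact .same (.cons _ (.cons₂ _ (.cons _ .slnil))) hpb
  · exact .same (.cons _ (.cons₂ _ (.cons₂ _ .slnil))) hpb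
  · exfalso
    have := hpb.sublist (List.Sublist.cons₂ (l₁ := [x]) _ (.cons₂ _ .slnil))
    simp [List.pairwise_cons] at this
    exact irrefl x (by tauto)
  · exact .same (.cons₂ _ (.cons₂ _ (.cons _ .slnil))) hpb
  · exfalso
    have := hpb.sublist (List.Sublist.cons₂ _ (.cons _ (.cons₂ _ .slnil)))
    simp [List.pairwise_cons] at this
    exact irrefl x (by tauto)

end

end KKaux

/-- K-Knuth equivalent words have equal longest strictly increasing subsequence
lengths and equal longest strictly decreasing subsequence lengths. -/
theorem kKnuth_lis_lds (w1 w2 : List ℕ+) (h : KKnuth w1 w2) :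
    lis w1 = lis w2 ∧ lds w1 = lds w2 := by
  induction h with
  | rel a b hab =>
    cases hab with
    | rel1 u v x y z h1 h2 =>
      exact ⟨KKaux.lis_eq u v (KKaux.H1lt12 h1 h2) (KKaux.H1lt21 h1 h2),
             KKaux.lds_eq u v (KKaux.H1gt12 h1 h2) (KKaux.H1gt21 h1 h2)⟩
    | rel2 u v x y z h1 h2 =>
      exact ⟨KKaux.lis_eq u v (KKaux.H2lt12 h1 h2) (KKaux.H2lt21 h1 h2),
             KKaux.lds_eq u v (KKaux.H2gt12 h1 h2) (KKaux.H2gt21 h1 h2)⟩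
    | rel3 u v x =>
      exact ⟨KKaux.lis_eq u v KKaux.H3a KKaux.H3b, KKaux.lds_eq u v KKaux.H3a KKaux.H3b⟩
    | rel4 u v x y =>
      exact ⟨KKaux.lis_eq u v KKaux.H4 KKaux.H4, KKaux.lds_eq u v KKaux.H4 KKaux.H4⟩
  | refl a => exact ⟨rfl, rfl⟩
  | symm a b _ ih => exact ⟨ih.1.symm, ih.2.symm⟩
  | trans a b c _ _ ih1 ih2 => exact ⟨ih1.1.trans ih2.1, ih1.2.trans ih2.2⟩
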